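/- Every 2-step nilpotent K-module (M, M₀) such that the K-module M/M₀ is free splits, i.e., is isomorphic as a 2-step nilpotent K-module to a central extension M₁ ∔ M₀ determined by a K-bilinear 2-cocycle b : M₁ × M₁ → M₀. -/

import Mathlib

/-- A 2-step nilpotent `K`-module `(M, M₀)`: `M` is a group (operation `mul`, written
multiplicatively, with the group structure given explicitly), `M₀` a central subgroup
realized by an injective homomorphism `ι` from a `K`-module, with commutator map
`comm`, a unital right action `act` of the multiplicative monoid `K^•` by
endomorphisms, and a map `τ : M → M₀` satisfying the axioms of the paper. -/
structure TwoStepNilMod (K M M₀ : Type*) [CommRing K] [AddCommGroup M₀]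
    [Module K M₀] where
  mul : M → M → M
  one : M
  inv : M → M
  mul_assoc : ∀ a b c, mul (mul a b) c = mul a (mul b c)
  one_mul : ∀ a, mul one a = a
  inv_mul : ∀ a, mul (inv a) a = one
  ι : M₀ → M
  ι_inj : Function.Injective ι
  ι_hom : ∀ v w, ι (v + w) = mul (ι v) (ι w)
  central : ∀ v m, mul (ι v) m = mul m (ι v)
  comm : M → M → M₀
  comm_spec : ∀ m m', mul m m' = mul (ι (comm m m')) (mul m' m)
  act : M → K → M
  act_one : ∀ m, act m 1 = m
  act_act : ∀ m k k', act (act m k) k' = act m (k * k')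
  act_hom : ∀ m m' k, act (mul m m') k = mul (act m k) (act m' k)
  comm_act : ∀ m m' k k', comm (act m k) (act m' k') = (k * k') • comm m m'
  τ : M → M₀
  act_add : ∀ m k k', act m (k + k') = mul (act m k) (mul (ι ((k * k') • τ m)) (act m k'))
  act_ι : ∀ v k, act (ι v) k = ι ((k * k) • v)

section Split

variable {K G A I : Type*} [CommRing K] [Group G] [AddCommGroup A] [Module K A]

/-- Abstract setup: a 2-step nilpotent K-module structure on a genuine group `G`. -/
structure NilSetup (K G A I : Type*) [CommRing K] [Group G] [AddCommGroup A]
    [Module K A] where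
  ι : A → G
  ι_inj : Function.Injective ι
  ι_hom : ∀ v w, ι (v + w) = ι v * ι w
  central : ∀ v g, ι v * g = g * ι v
  comm : G → G → A
  comm_spec : ∀ m m', m * m' = ι (comm m m') * (m' * m)
  act : G → K → G
  act_one : ∀ m, act m 1 = m
  act_act : ∀ m k k', act (act m k) k' = act m (k * k')
  act_hom : ∀ m m' k, act (m * m') k = act m k * act m' k
  comm_act : ∀ m m' k k', comm (act m k) (act m' k') = (k * k') • comm m m'
  τ : G → A
  act_add : ∀ m k k', act m (k + k') = act m k * (ι ((k * k') • τ m) * act m k')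
  act_ι : ∀ v k, act (ι v) k = ι ((k * k) • v)
  σ : G → (I →₀ K)
  hsurj : Function.Surjective σ
  hhom : ∀ m m', σ (m * m') = σ m + σ m'
  hact : ∀ m k, σ (act m k) = k • σ m
  hker : ∀ m, σ m = 0 ↔ ∃ v, m = ι v

namespace NilSetup

variable (S : NilSetup K G A I)

lemma ι_zero : S.ι 0 = 1 := by
  have h := S.ι_hom 0 0
  rw [add_zero] at h
  exact left_eq_mul.mp h

lemma ι_neg (v : A) : S.ι (-v) = (S.ι v)⁻¹ := by
  have h := S.ι_hom v (-v)
  rw [add_neg_cancel, S.ι_zero] at h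
  exact (inv_eq_of_mul_eq_one_right h.symm).symm

lemma cen1 (v : A) (a b : G) : a * (S.ι v * b) = S.ι v * (a * b) := by
  rw [← mul_assoc, ← S.central v a, mul_assoc]

lemma cen3 (u v w : A) (g h : G) :
    S.ι u * ((S.ι v * g) * (S.ι w * h)) = S.ι (u + (w + v)) * (g * h) := by
  rw [mul_assoc (S.ι v) g, S.cen1 w g h, ← mul_assoc (S.ι v), ← S.ι_hom,
    ← mul_assoc, ← S.ι_hom]
  have huv : u + (v + w) = u + (w + v) := by abel
  rw [huv]

lemma act_zero (m : G) : S.act m 0 = 1 := by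
  have h := S.act_add m 0 0
  rw [add_zero, mul_zero, zero_smul, S.ι_zero, one_mul] at h
  exact left_eq_mul.mp h

lemma act_oneG (k : K) : S.act 1 k = 1 := by
  have h := S.act_hom 1 1 k
  rw [one_mul] at h
  exact left_eq_mul.mp h

lemma σ_one : S.σ 1 = 0 := by
  have h := S.hhom 1 1
  rw [one_mul] at h
  exact left_eq_add.mp h

lemma σ_inv (m : G) : S.σ m⁻¹ = -S.σ m := by
  have h := S.hhom m⁻¹ m
  rw [inv_mul_cancel, S.σ_one] at h
  exact eq_neg_of_add_eq_zero_left h.symm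

lemma σ_ι (v : A) : S.σ (S.ι v) = 0 := (S.hker _).mpr ⟨v, rfl⟩

/-- chosen preimages of the basis vectors -/
noncomputable def e (i : I) : G := (S.hsurj (Finsupp.single i 1)).choose

lemma σ_e (i : I) : S.σ (S.e i) = Finsupp.single i 1 :=
  (S.hsurj (Finsupp.single i 1)).choose_spec

/-- product of actions of basis preimages along a list -/
noncomputable def P (x : I →₀ K) : List I → G
  | [] => 1
  | i :: l => S.act (S.e i) (x i) * P x l

lemma σ_P (x : I →₀ K) (l : List I) :
    S.σ (S.P x l) = (l.map fun i => Finsupp.single i (x i)).sum := by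
  induction l with
  | nil => simpa [P] using S.σ_one
  | cons i l ih =>
      simp only [P, List.map_cons, List.sum_cons, S.hhom, S.hact, ih, S.σ_e]
      rw [Finsupp.smul_single, smul_eq_mul, mul_one]

lemma P_act (x : I →₀ K) (k : K) (l : List I) :
    S.act (S.P x l) k = S.P (k • x) l := by
  induction l with
  | nil => simpa [P] using S.act_oneG k
  | cons i l ih =>
      simp only [P, S.act_hom, S.act_act, ih]
      congr 1
      rw [Finsupp.smul_apply, smul_eq_mul, mul_comm]

lemma P_filter (x : I →₀ K) (p : I → Bool) (hp : ∀ i, p i = false → x i = 0) :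
    ∀ l : List I, S.P x l = S.P x (l.filter p)
  | [] => rfl
  | i :: l => by
      rcases hpi : p i with _ | _
      · rw [List.filter_cons_of_neg (by simp [hpi])]
        simp only [P, hp i hpi, S.act_zero, one_mul]
        exact P_filter x p hp l
      · rw [List.filter_cons_of_pos hpi]
        simp only [P]
        rw [P_filter x p hp l]

lemma sorted_eq [LinearOrder I] {l l' : List I} (hl : List.Pairwise (· < ·) l)
    (hl' : List.Pairwise (· < ·) l') (h : l.toFinset = l'.toFinset) : l = l' := by
  haveI : Std.Antisymm (α := I) (· < ·) := ⟨fun a b h1 h2 => absurd h2 (lt_asymm h1)⟩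
  exact (List.perm_of_nodup_nodup_toFinset_eq hl.nodup hl'.nodup h).eq_of_pairwise' hl hl'

/-- canonical section -/
noncomputable def sfun [LinearOrder I] (x : I →₀ K) : G :=
  S.P x (x.support.sort (· ≤ ·))

lemma P_eq_sfun [LinearOrder I] {x : I →₀ K} {l : List I}
    (hl : List.Pairwise (· < ·) l) (hsup : x.support ⊆ l.toFinset) :
    S.P x l = S.sfun x := by
  classical
  set p : I → Bool := fun i => decide (x i ≠ 0) with hpdef
  have hp : ∀ i, p i = false → x i = 0 := by
    intro i hi
    have := of_decide_eq_false hi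
    simpa using this
  have hptrue : ∀ i, p i = true ↔ x i ≠ 0 := by
    intro i; simp [hpdef]
  have h1 : S.P x l = S.P x (l.filter p) := S.P_filter x p hp l
  have h2 : S.sfun x = S.P x ((x.support.sort (· ≤ ·)).filter p) := by
    rw [sfun, S.P_filter x p hp]
  rw [h1, h2]
  congr 1
  apply sorted_eq (hl.filter p) ((Finset.sortedLT_sort x.support).pairwise.filter p)
  rw [List.toFinset_filter, List.toFinset_filter, Finset.sort_toFinset]
  ext i
  simp only [Finset.mem_filter, Finsupp.mem_support_iff, hptrue]
  constructor
  · rintro ⟨-, h⟩; exact ⟨h, h⟩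
  · rintro ⟨h, -⟩
    exact ⟨hsup (Finsupp.mem_support_iff.mpr h), h⟩

lemma σ_sfun [LinearOrder I] (x : I →₀ K) : S.σ (S.sfun x) = x := by
  rw [sfun, σ_P, ← List.sum_toFinset _ (Finset.sort_nodup _ _), Finset.sort_toFinset]
  conv_rhs => rw [← Finsupp.sum_single x]
  rfl

lemma sfun_zero [LinearOrder I] : S.sfun (0 : I →₀ K) = 1 := by
  rw [sfun]
  simp [P]

lemma sfun_act [LinearOrder I] (x : I →₀ K) (k : K) :
    S.act (S.sfun x) k = S.sfun (k • x) := by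
  rw [sfun, P_act]
  exact S.P_eq_sfun (Finset.sortedLT_sort _).pairwise
    (by rw [Finset.sort_toFinset]; exact Finsupp.support_smul)

/-- move an action term from the right to the left of a product -/
lemma moveLeft (x : I →₀ K) (i : I) (a : K) (l : List I) :
    S.P x l * S.act (S.e i) a =
      S.ι ((l.map fun j => (x j * a) • S.comm (S.e j) (S.e i)).sum) *
        (S.act (S.e i) a * S.P x l) := by
  induction l with
  | nil => simp [P, S.ι_zero]
  | cons j l ih =>
      have hswap : S.act (S.e j) (x j) * S.act (S.e i) a
          = S.ι ((x j * a) • S.comm (S.e j) (S.e i)) *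
              (S.act (S.e i) a * S.act (S.e j) (x j)) := by
        rw [S.comm_spec (S.act (S.e j) (x j)) (S.act (S.e i) a), S.comm_act]
      simp only [P, List.map_cons, List.sum_cons]
      calc S.act (S.e j) (x j) * S.P x l * S.act (S.e i) a
          = S.act (S.e j) (x j) * (S.P x l * S.act (S.e i) a) := mul_assoc _ _ _
        _ = S.act (S.e j) (x j) *
              (S.ι ((l.map fun j => (x j * a) • S.comm (S.e j) (S.e i)).sum) *
                (S.act (S.e i) a * S.P x l)) := by rw [ih]
        _ = S.ι ((l.map fun j => (x j * a) • S.comm (S.e j) (S.e i)).sum) *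
              (S.act (S.e j) (x j) * (S.act (S.e i) a * S.P x l)) := S.cen1 _ _ _
        _ = S.ι ((l.map fun j => (x j * a) • S.comm (S.e j) (S.e i)).sum) *
              ((S.act (S.e j) (x j) * S.act (S.e i) a) * S.P x l) := by
                rw [mul_assoc]
        _ = S.ι ((l.map fun j => (x j * a) • S.comm (S.e j) (S.e i)).sum) *
              ((S.ι ((x j * a) • S.comm (S.e j) (S.e i)) *
                (S.act (S.e i) a * S.act (S.e j) (x j))) * S.P x l) := by
                rw [hswap]
        _ = S.ι ((l.map fun j => (x j * a) • S.comm (S.e j) (S.e i)).sum) *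
              (S.ι ((x j * a) • S.comm (S.e j) (S.e i)) *
                (S.act (S.e i) a * (S.act (S.e j) (x j) * S.P x l))) := by
                rw [mul_assoc, mul_assoc]
        _ = (S.ι ((l.map fun j => (x j * a) • S.comm (S.e j) (S.e i)).sum) *
              S.ι ((x j * a) • S.comm (S.e j) (S.e i))) *
                (S.act (S.e i) a * (S.act (S.e j) (x j) * S.P x l)) := by
                rw [mul_assoc]
        _ = S.ι ((x j * a) • S.comm (S.e j) (S.e i) +
              (l.map fun j => (x j * a) • S.comm (S.e j) (S.e i)).sum) *
                (S.act (S.e i) a * (S.act (S.e j) (x j) * S.P x l)) := by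
                rw [← S.ι_hom, add_comm]

/-- structure constants of the cocycle -/
noncomputable def c [LinearOrder I] (j i : I) : A :=
  if i < j then S.comm (S.e j) (S.e i) else if j = i then -S.τ (S.e j) else 0

lemma c_comm [LinearOrder I] {j i : I} (h : i < j) :
    S.c j i = S.comm (S.e j) (S.e i) := if_pos h

lemma c_diag [LinearOrder I] (i : I) : S.c i i = -S.τ (S.e i) := by
  rw [c, if_neg (lt_irrefl i), if_pos rfl]

lemma c_zero [LinearOrder I] {j i : I} (h : j < i) : S.c j i = 0 := by
  rw [c, if_neg (by exact fun h' => absurd h (lt_asymm h')), if_neg (ne_of_lt h)]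

lemma act_mul_act (m : G) (k k' : K) :
    S.act m k * S.act m k' = S.ι (-((k * k') • S.τ m)) * S.act m (k + k') := by
  rw [S.act_add m k k', S.cen1, ← mul_assoc, ← S.ι_hom, neg_add_cancel, S.ι_zero,
    one_mul]

/-- main cocycle computation -/
lemma Bmain [LinearOrder I] (x y : I →₀ K) (l : List I)
    (hl : List.Pairwise (· < ·) l) :
    S.P x l * S.P y l =
      S.ι (∑ j ∈ l.toFinset, ∑ i ∈ l.toFinset, (x j * y i) • S.c j i) *
        S.P (x + y) l := by
  induction l with
  | nil => simp [P, S.ι_zero]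
  | cons i l ih =>
      obtain ⟨hlt, hl'⟩ := List.pairwise_cons.mp hl
      have hiT : i ∉ l.toFinset := fun h =>
        absurd (hlt i (List.mem_toFinset.mp h)) (lt_irrefl i)
      -- the sum identity
      have hlist : (l.map fun j => (x j * y i) • S.comm (S.e j) (S.e i)).sum
          = ∑ j ∈ l.toFinset, (x j * y i) • S.c j i := by
        rw [← List.sum_toFinset _ hl'.nodup]
        exact Finset.sum_congr rfl fun j hj => by
          rw [S.c_comm (hlt j (List.mem_toFinset.mp hj))]
      have hsum : ∑ j ∈ (i :: l).toFinset, ∑ i' ∈ (i :: l).toFinset,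
            (x j * y i') • S.c j i'
          = (l.map fun j => (x j * y i) • S.comm (S.e j) (S.e i)).sum +
              ((∑ j ∈ l.toFinset, ∑ i' ∈ l.toFinset, (x j * y i') • S.c j i') +
                (-((x i * y i) • S.τ (S.e i)))) := by
        rw [List.toFinset_cons, Finset.sum_insert hiT]
        have h2 : ∑ i' ∈ insert i l.toFinset, (x i * y i') • S.c i i'
            = -((x i * y i) • S.τ (S.e i)) := by
          rw [Finset.sum_insert hiT, S.c_diag,
            Finset.sum_eq_zero fun i' hi' => by
              rw [S.c_zero (hlt i' (List.mem_toFinset.mp hi')), smul_zero],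
            add_zero, smul_neg]
        have h3 : ∀ j ∈ l.toFinset, ∑ i' ∈ insert i l.toFinset,
              (x j * y i') • S.c j i'
            = (x j * y i) • S.c j i + ∑ i' ∈ l.toFinset, (x j * y i') • S.c j i' :=
          fun j _ => Finset.sum_insert hiT
        rw [h2, Finset.sum_congr rfl h3, Finset.sum_add_distrib, hlist]
        abel
      -- the group computation
      have hxyi : x i + y i = (x + y) i := (Finsupp.add_apply x y i).symm
      simp only [P]
      calc S.act (S.e i) (x i) * S.P x l * (S.act (S.e i) (y i) * S.P y l)
          = S.act (S.e i) (x i) * ((S.P x l * S.act (S.e i) (y i)) * S.P y l) := by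
            rw [mul_assoc, mul_assoc]
        _ = S.act (S.e i) (x i) *
              ((S.ι ((l.map fun j => (x j * y i) • S.comm (S.e j) (S.e i)).sum) *
                (S.act (S.e i) (y i) * S.P x l)) * S.P y l) := by
            rw [S.moveLeft x i (y i) l]
        _ = S.act (S.e i) (x i) *
              (S.ι ((l.map fun j => (x j * y i) • S.comm (S.e j) (S.e i)).sum) *
                ((S.act (S.e i) (y i) * S.P x l) * S.P y l)) := by
            rw [mul_assoc]
        _ = S.ι ((l.map fun j => (x j * y i) • S.comm (S.e j) (S.e i)).sum) *
              (S.act (S.e i) (x i) * ((S.act (S.e i) (y i) * S.P x l) * S.P y l)) :=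
            S.cen1 _ _ _
        _ = S.ι ((l.map fun j => (x j * y i) • S.comm (S.e j) (S.e i)).sum) *
              ((S.act (S.e i) (x i) * S.act (S.e i) (y i)) * (S.P x l * S.P y l)) := by
            rw [mul_assoc, mul_assoc]
        _ = S.ι ((l.map fun j => (x j * y i) • S.comm (S.e j) (S.e i)).sum) *
              ((S.ι (-((x i * y i) • S.τ (S.e i))) * S.act (S.e i) (x i + y i)) *
                (S.ι (∑ j ∈ l.toFinset, ∑ i' ∈ l.toFinset, (x j * y i') • S.c j i') *
                  S.P (x + y) l)) := by
            rw [S.act_mul_act, ih hl']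
        _ = S.ι ((l.map fun j => (x j * y i) • S.comm (S.e j) (S.e i)).sum +
              ((∑ j ∈ l.toFinset, ∑ i' ∈ l.toFinset, (x j * y i') • S.c j i') +
                (-((x i * y i) • S.τ (S.e i))))) *
                  (S.act (S.e i) (x i + y i) * S.P (x + y) l) :=
            S.cen3 _ _ _ _ _
        _ = S.ι (∑ j ∈ (i :: l).toFinset, ∑ i' ∈ (i :: l).toFinset,
              (x j * y i') • S.c j i') *
                (S.act (S.e i) ((x + y) i) * S.P (x + y) l) := by
            rw [← hsum, hxyi]

/-- the bilinear cocycle -/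
noncomputable def bmap [LinearOrder I] : (I →₀ K) →ₗ[K] (I →₀ K) →ₗ[K] A :=
  Finsupp.lsum K fun j => LinearMap.toSpanSingleton K ((I →₀ K) →ₗ[K] A)
    (Finsupp.lsum K fun i => LinearMap.toSpanSingleton K A (S.c j i))

lemma bmap_eq [LinearOrder I] (x y : I →₀ K) (t : Finset I)
    (hx : x.support ⊆ t) (hy : y.support ⊆ t) :
    S.bmap x y = ∑ j ∈ t, ∑ i ∈ t, (x j * y i) • S.c j i := by
  have h1 : S.bmap x y = ∑ j ∈ x.support, ∑ i ∈ y.support,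
      (x j * y i) • S.c j i := by
    simp only [bmap, Finsupp.lsum_apply, Finsupp.sum, LinearMap.toSpanSingleton_apply,
      LinearMap.sum_apply, LinearMap.smul_apply, Finset.smul_sum, smul_smul]
  rw [h1]
  calc ∑ j ∈ x.support, ∑ i ∈ y.support, (x j * y i) • S.c j i
      = ∑ j ∈ x.support, ∑ i ∈ t, (x j * y i) • S.c j i :=
        Finset.sum_congr rfl fun j _ => Finset.sum_subset hy fun i _ hi => by
          rw [Finsupp.notMem_support_iff.mp hi, mul_zero, zero_smul]
    _ = ∑ j ∈ t, ∑ i ∈ t, (x j * y i) • S.c j i :=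
        Finset.sum_subset hx fun j _ hj => Finset.sum_eq_zero fun i _ => by
          rw [Finsupp.notMem_support_iff.mp hj, zero_mul, zero_smul]

lemma sfun_mul [LinearOrder I] (x y : I →₀ K) :
    S.sfun x * S.sfun y = S.ι (S.bmap x y) * S.sfun (x + y) := by
  classical
  set l : List I := (x.support ∪ y.support).sort (· ≤ ·) with hl
  have hls : List.Pairwise (· < ·) l := (Finset.sortedLT_sort _).pairwise
  have hlt : l.toFinset = x.support ∪ y.support := Finset.sort_toFinset _ _
  have hx : x.support ⊆ l.toFinset := by rw [hlt]; exact Finset.subset_union_left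
  have hy : y.support ⊆ l.toFinset := by rw [hlt]; exact Finset.subset_union_right
  have hxy : (x + y).support ⊆ l.toFinset := by
    rw [hlt]; exact Finsupp.support_add
  rw [← S.P_eq_sfun hls hx, ← S.P_eq_sfun hls hy, ← S.P_eq_sfun hls hxy,
    S.Bmain x y l hls, S.bmap_eq x y l.toFinset hx hy]

lemma mul_ι_mul (v w : A) (a b : G) :
    (a * S.ι v) * (b * S.ι w) = (a * b) * S.ι (v + w) := by
  calc (a * S.ι v) * (b * S.ι w) = a * (S.ι v * (b * S.ι w)) := mul_assoc _ _ _
    _ = a * (b * (S.ι v * S.ι w)) := by rw [← mul_assoc (S.ι v), S.central,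
        mul_assoc]
    _ = (a * b) * (S.ι v * S.ι w) := by rw [mul_assoc]
    _ = (a * b) * S.ι (v + w) := by rw [← S.ι_hom]

variable [LinearOrder I]

lemma exists_p (m : G) : ∃ v, m = S.sfun (S.σ m) * S.ι v := by
  have h : S.σ ((S.sfun (S.σ m))⁻¹ * m) = 0 := by
    rw [S.hhom, S.σ_inv, S.σ_sfun, neg_add_cancel]
  obtain ⟨v, hv⟩ := (S.hker _).mp h
  exact ⟨v, by rw [← hv, mul_inv_cancel_left]⟩

noncomputable def p (m : G) : A := (S.exists_p m).choose

lemma p_spec (m : G) : m = S.sfun (S.σ m) * S.ι (S.p m) := (S.exists_p m).choose_spec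

lemma p_unique {m : G} {v : A} (h : m = S.sfun (S.σ m) * S.ι v) : S.p m = v := by
  have h2 := S.p_spec m
  exact S.ι_inj (mul_left_cancel (h2.symm.trans h))

lemma p_ι (v : A) : S.p (S.ι v) = v :=
  S.p_unique (by rw [S.σ_ι, S.sfun_zero, one_mul])

lemma p_one : S.p (1 : G) = 0 :=
  S.p_unique (by rw [S.σ_one, S.sfun_zero, S.ι_zero, one_mul])

lemma p_mul (m m' : G) :
    S.p (m * m') = S.p m + S.bmap (S.σ m) (S.σ m') + S.p m' := by
  apply S.p_unique
  conv_lhs => rw [S.p_spec m, S.p_spec m']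
  rw [S.mul_ι_mul, S.sfun_mul, S.hhom]
  calc S.ι (S.bmap (S.σ m) (S.σ m')) * S.sfun (S.σ m + S.σ m') *
        S.ι (S.p m + S.p m')
      = S.sfun (S.σ m + S.σ m') * S.ι (S.bmap (S.σ m) (S.σ m')) *
          S.ι (S.p m + S.p m') := by rw [S.central]
    _ = S.sfun (S.σ m + S.σ m') *
          S.ι (S.bmap (S.σ m) (S.σ m') + (S.p m + S.p m')) := by
        rw [mul_assoc, ← S.ι_hom]
    _ = S.sfun (S.σ m + S.σ m') *
          S.ι (S.p m + S.bmap (S.σ m) (S.σ m') + S.p m') := by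
        congr 1
        abel

lemma p_act (m : G) (k : K) : S.p (S.act m k) = (k * k) • S.p m := by
  apply S.p_unique
  conv_lhs => rw [S.p_spec m]
  rw [S.act_hom, S.sfun_act, S.act_ι, S.hact]

lemma p_inv (m : G) : S.p m⁻¹ = -S.p m + S.bmap (S.σ m) (S.σ m) := by
  have h := S.p_mul m m⁻¹
  rw [mul_inv_cancel, S.p_one, S.σ_inv, map_neg] at h
  have h2 : S.p m + -S.bmap (S.σ m) (S.σ m) + S.p m⁻¹ = 0 := h.symm
  rw [eq_neg_of_add_eq_zero_right h2]
  abel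

lemma tau_eq (m : G) : S.τ m = 2 • S.p m - S.bmap (S.σ m) (S.σ m) := by
  have h0 : S.act m ((1 : K) + (-1)) = 1 := by rw [add_neg_cancel, S.act_zero]
  have h1 : S.act m ((1 : K) + (-1)) = m * (S.ι (-S.τ m) * S.act m (-1)) := by
    rw [S.act_add m 1 (-1), S.act_one]
    congr 3
    rw [one_mul, neg_smul, one_smul]
  have hA : S.ι (-S.τ m) * S.act m (-1) = m⁻¹ :=
    eq_inv_of_mul_eq_one_right (h1.symm.trans h0)
  have h2 : S.act m (-1 : K) = S.ι (S.τ m) * m⁻¹ := by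
    rw [← hA, ← mul_assoc, ← S.ι_hom, add_neg_cancel, S.ι_zero, one_mul]
  have h4 : S.act m (-1 : K) = S.sfun (-S.σ m) * S.ι (S.p m) := by
    conv_lhs => rw [S.p_spec m]
    rw [S.act_hom, S.sfun_act, S.act_ι, neg_one_smul]
    congr 2
    rw [show ((-1 : K) * (-1)) = 1 by ring, one_smul]
  have h5 : m⁻¹ = S.sfun (-S.σ m) * S.ι (-S.p m + S.bmap (S.σ m) (S.σ m)) := by
    conv_lhs => rw [S.p_spec m⁻¹]
    rw [S.σ_inv, S.p_inv]
  have h6 : S.sfun (-S.σ m) * S.ι (S.p m) =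
      S.sfun (-S.σ m) * S.ι (S.τ m + (-S.p m + S.bmap (S.σ m) (S.σ m))) := by
    rw [← h4, h2, h5, ← S.cen1, ← S.ι_hom]
  have h7 : S.p m = S.τ m + (-S.p m + S.bmap (S.σ m) (S.σ m)) :=
    S.ι_inj (mul_left_cancel h6)
  have h8 : S.τ m = S.p m + S.p m - S.bmap (S.σ m) (S.σ m) := by
    rw [eq_sub_of_add_eq h7.symm]; abel
  rw [two_nsmul]
  exact h8

theorem split :
    ∃ (b : (I →₀ K) →ₗ[K] (I →₀ K) →ₗ[K] A) (f : G → (I →₀ K) × A),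
      Function.Bijective f ∧
      (∀ m m', f (m * m') =
        ((f m).1 + (f m').1, (f m).2 + b (f m).1 (f m').1 + (f m').2)) ∧
      (∀ m k, f (S.act m k) = (k • (f m).1, (k * k) • (f m).2)) ∧
      (∀ v, f (S.ι v) = (0, v)) ∧
      (∀ m, S.τ m = 2 • (f m).2 - b (f m).1 (f m).1) := by
  refine ⟨S.bmap, fun m => (S.σ m, S.p m), ⟨?_, ?_⟩, ?_, ?_, ?_, ?_⟩
  · intro m m' h
    have h1 : S.σ m = S.σ m' := congrArg Prod.fst h
    have h2 : S.p m = S.p m' := congrArg Prod.snd h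
    rw [S.p_spec m, S.p_spec m', h1, h2]
  · rintro ⟨x, v⟩
    refine ⟨S.sfun x * S.ι v, ?_⟩
    have hσ : S.σ (S.sfun x * S.ι v) = x := by
      rw [S.hhom, S.σ_ι, S.σ_sfun, add_zero]
    have hp : S.p (S.sfun x * S.ι v) = v := S.p_unique (by rw [hσ])
    simp only [hσ, hp]
  · intro m m'
    simp only [Prod.mk.injEq]
    exact ⟨S.hhom m m', S.p_mul m m'⟩
  · intro m k
    simp only [Prod.mk.injEq]
    exact ⟨S.hact m k, S.p_act m k⟩
  · intro v
    simp only [Prod.mk.injEq]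
    exact ⟨S.σ_ι v, S.p_ι v⟩
  · intro m
    exact S.tau_eq m

end NilSetup

end Split


/-- Every 2-step nilpotent `K`-module `(M, M₀)` whose quotient `K`-module
`M/M₀` is free splits: it is isomorphic to a central extension `M₁ ∔ M₀` given by a
`K`-bilinear 2-cocycle `b`. Freeness of `M/M₀` is encoded by a surjection
`σ : M → (I →₀ K)` which is a homomorphism compatible with the action and whose
kernel is exactly `M₀`. -/
theorem stmt_10 {K M M₀ : Type*} [CommRing K] [AddCommGroup M₀] [Module K M₀]
    (T : TwoStepNilMod K M M₀) (I : Type*) (σ : M → (I →₀ K))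
    (hsurj : Function.Surjective σ)
    (hhom : ∀ m m', σ (T.mul m m') = σ m + σ m')
    (hact : ∀ m k, σ (T.act m k) = k • σ m)
    (hker : ∀ m, σ m = 0 ↔ ∃ v, m = T.ι v) :
    ∃ (b : (I →₀ K) →ₗ[K] (I →₀ K) →ₗ[K] M₀) (f : M → (I →₀ K) × M₀),
      Function.Bijective f ∧
      (∀ m m', f (T.mul m m') =
        ((f m).1 + (f m').1, (f m).2 + b (f m).1 (f m').1 + (f m').2)) ∧
      (∀ m k, f (T.act m k) = (k • (f m).1, (k * k) • (f m).2)) ∧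
      (∀ v, f (T.ι v) = (0, v)) ∧
      (∀ m, T.τ m = 2 • (f m).2 - b (f m).1 (f m).1) := by
  letI : Mul M := ⟨T.mul⟩
  letI : One M := ⟨T.one⟩
  letI : Inv M := ⟨T.inv⟩
  letI : Group M := Group.ofLeftAxioms T.mul_assoc T.one_mul T.inv_mul
  haveI : DecidableRel (@WellOrderingRel I) := fun _ _ => Classical.dec _
  letI : LinearOrder I := linearOrderOfSTO WellOrderingRel
  let S : NilSetup K M M₀ I :=
    { ι := T.ι, ι_inj := T.ι_inj, ι_hom := T.ι_hom, central := T.central,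
      comm := T.comm, comm_spec := T.comm_spec, act := T.act,
      act_one := T.act_one, act_act := T.act_act, act_hom := T.act_hom,
      comm_act := T.comm_act, τ := T.τ, act_add := T.act_add, act_ι := T.act_ι,
      σ := σ, hsurj := hsurj, hhom := hhom, hact := hact, hker := hker }
  obtain ⟨b, f, h1, h2, h3, h4, h5⟩ := S.split
  exact ⟨b, f, h1, h2, h3, h4, h5⟩
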